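/- Let n ≥ 1 be an integer. Let x, y be binary words of the same length and u, v binary words of the same length such that the concatenations xu and yv are valid Fibonacci representations. Then: (i) if [y] − n[x] ≤ −n−1, then [yv] − n[xu] ≤ −n−1; and (ii) if [y] − n[x] ≥ 2n, then [yv] − n[xu] ≥ n. In particular, once the difference [y] − n[x] leaves the interval I_n = [−n, 2n−1] below −n or at or above 2n, no valid right extension of the pair can have difference in [0, n−1]. -/

import Mathlib

/-- The Fibonacci (Zeckendorf) value of a binary word written msd-first:
`[x₁⋯x_ℓ] = Σ_j x_j · F_{ℓ−j+2}`. -/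
def fibVal : List Bool → ℕ
  | [] => 0
  | a :: rest => (if a then Nat.fib (rest.length + 2) else 0) + fibVal rest

/-- A binary word is a valid Fibonacci representation if it has no factor `11`. -/
def ValidFib (w : List Bool) : Prop :=
  w.Chain' (fun a b => a = false ∨ b = false)

/-- The numerical value of a single bit. -/
def bitVal (a : Bool) : ℤ := if a then 1 else 0

def downVal : List Bool → ℕ
  | [] => 0
  | a :: rest => (if a then Nat.fib (rest.length + 1) else 0) + downVal rest

noncomputable def rr : ℝ := (Real.sqrt 5 - 1) / 2

lemma s5_sq : Real.sqrt 5 ^ 2 = 5 := Real.sq_sqrt (by norm_num)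
lemma s5_nonneg : (0:ℝ) ≤ Real.sqrt 5 := Real.sqrt_nonneg 5

lemma rr_sq : rr ^ 2 = 1 - rr := by
  unfold rr; linear_combination (1/4 : ℝ) * s5_sq

lemma rr_ge_half : (1/2 : ℝ) ≤ rr := by
  unfold rr; nlinarith [s5_sq, s5_nonneg]

lemma rr_lt_one : rr < 1 := by
  unfold rr; nlinarith [s5_sq, s5_nonneg]

lemma rr_pos : (0:ℝ) < rr := lt_of_lt_of_le (by norm_num) rr_ge_half

lemma rr_le_34 : rr ≤ 3/4 := by
  unfold rr; nlinarith [s5_sq, s5_nonneg]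

lemma fib_real (k : ℕ) : (Nat.fib (k+1) : ℝ) = (1 + rr) * Nat.fib k + (-rr)^k := by
  induction k with
  | zero => simp
  | succ k ih =>
    have h2 : Nat.fib (k+2) = Nat.fib k + Nat.fib (k+1) := Nat.fib_add_two
    rw [h2]
    push_cast
    rw [ih]
    linear_combination (-(Nat.fib k : ℝ)) * rr_sq

lemma pow_le_pow_rr {i j : ℕ} (h : i ≤ j) : rr ^ j ≤ rr ^ i :=
  pow_le_pow_of_le_one rr_pos.le rr_lt_one.le h

lemma rr_cube : rr ^ 3 = 2*rr - 1 := by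
  have : rr ^ 3 = rr ^ 2 * rr := by ring
  rw [this, rr_sq]; linear_combination (-1 : ℝ) * rr_sq

def BridgeP (w : List Bool) : Prop :=
  (fibVal w : ℝ) + (downVal w : ℝ) ≤ (1 + rr) * (fibVal w : ℝ) + rr - rr ^ (w.length + 2) ∧
  (1 + rr) * (fibVal w : ℝ) - ((fibVal w : ℝ) + (downVal w : ℝ)) ≤ (1 - rr) - rr ^ (w.length + 2)

lemma bridgeP_nil : BridgeP [] := by
  constructor <;> simp [fibVal, downVal] <;> nlinarith [rr_sq, rr_ge_half, rr_pos]

lemma bridgeP_single (a : Bool) : BridgeP [a] := by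
  cases a <;> constructor <;>
    simp [fibVal, downVal, Nat.fib] <;>
    nlinarith [rr_cube, rr_ge_half, rr_le_34, rr_pos, rr_lt_one, rr_sq]

lemma bridge_aux : ∀ (L : ℕ) (w : List Bool), w.length ≤ L → ValidFib w → BridgeP w := by
  intro L
  induction L with
  | zero =>
    intro w hw _
    have : w = [] := List.eq_nil_of_length_eq_zero (Nat.le_zero.mp hw)
    rw [this]; exact bridgeP_nil
  | succ L IH =>
    intro w hlen hv
    match w with
    | [] => exact bridgeP_nil
    | [a] => exact bridgeP_single a
    | false :: b :: t =>
      have hv' : ValidFib (b :: t) := hv.tail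
      have hlen' : (b :: t).length ≤ L := by simp at hlen ⊢; omega
      have hp := IH (b :: t) (by omega) hv'
      obtain ⟨h1, h2⟩ := hp
      have hpow : rr ^ ((false :: b :: t).length + 2) ≤ rr ^ ((b :: t).length + 2) :=
        pow_le_pow_rr (by simp)
      constructor
      · simp only [fibVal, downVal, if_neg Bool.false_ne_true, List.length_cons] at *
        push_cast at *
        linarith
      · simp only [fibVal, downVal, if_neg Bool.false_ne_true, List.length_cons] at *
        push_cast at *
        linarith
    | true :: b :: t =>
      have hb : b = false := by
        have := (List.isChain_cons_cons.mp hv).1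
        simpa using this
      subst hb
      have hv' : ValidFib t := hv.tail.tail
      have hp := IH t (by simp at hlen; omega) hv'
      obtain ⟨h1, h2⟩ := hp
      set L' := t.length with hL'
      have e1 : (Nat.fib (L'+4) : ℝ) = (1 + rr) * Nat.fib (L'+3) + (-rr)^(L'+3) := fib_real (L'+3)
      have e2 : (Nat.fib (L'+4) : ℝ) = Nat.fib (L'+2) + Nat.fib (L'+3) := by
        have : Nat.fib (L'+4) = Nat.fib (L'+2) + Nat.fib (L'+3) := Nat.fib_add_two
        exact_mod_cast this
      have habs : |(-rr)^(L'+3)| = rr^(L'+3) := by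
        rw [abs_pow, abs_neg, abs_of_pos rr_pos]
      have hle : (-rr)^(L'+3) ≤ rr^(L'+3) := le_of_abs_le habs.le
      have hge : -(rr^(L'+3)) ≤ (-rr)^(L'+3) := neg_le_of_abs_le habs.le
      have key : rr^(L'+4) = rr^(L'+2) - rr^(L'+3) := by
        have h4 : rr^(L'+4) = rr^(L'+2) * rr^2 := by ring
        rw [h4, rr_sq]; ring
      constructor
      · show (fibVal (true :: false :: t) : ℝ) + (downVal (true :: false :: t) : ℝ) ≤ _
        simp only [fibVal, downVal, List.length_cons, if_pos, if_neg Bool.false_ne_true]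
        push_cast
        have : L' + 1 + 2 = L' + 3 := by ring
        rw [show L' + 1 + 2 = L' + 3 from by ring, show L' + 1 + 1 = L' + 2 from by ring,
            show L' + 1 + 1 + 2 = L' + 4 from by ring]
        linarith
      · show (1 + rr) * (fibVal (true :: false :: t) : ℝ) - _ ≤ _
        simp only [fibVal, downVal, List.length_cons, if_pos, if_neg Bool.false_ne_true]
        push_cast
        rw [show L' + 1 + 2 = L' + 3 from by ring, show L' + 1 + 1 = L' + 2 from by ring,
            show L' + 1 + 1 + 2 = L' + 4 from by ring]
        linarith

lemma bridge (w : List Bool) (hw : ValidFib w) : BridgeP w :=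
  bridge_aux w.length w le_rfl hw

noncomputable def Bfl (t : ℤ) : ℤ := ⌊(t : ℝ) * (1 + rr)⌋

lemma downVal_eq (w : List Bool) (hw : ValidFib w) :
    (downVal w : ℤ) = Bfl ((fibVal w : ℤ) + 1) - (fibVal w : ℤ) - 1 := by
  obtain ⟨h1, h2⟩ := bridge w hw
  have hpow : (0:ℝ) < rr ^ (w.length + 2) := pow_pos rr_pos _
  have : Bfl ((fibVal w : ℤ) + 1) = (downVal w : ℤ) + (fibVal w : ℤ) + 1 := by
    rw [Bfl, Int.floor_eq_iff]
    constructor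
    · push_cast; nlinarith [rr_pos]
    · push_cast; nlinarith [rr_pos]
  rw [this]; ring

lemma Bfl_zero : Bfl 0 = 0 := by simp [Bfl]

lemma Bfl_mono {s t : ℤ} (h : s ≤ t) : Bfl s ≤ Bfl t := by
  apply Int.floor_le_floor
  have : (0:ℝ) ≤ 1 + rr := by nlinarith [rr_pos]
  exact mul_le_mul_of_nonneg_right (by exact_mod_cast h) this

lemma Bfl_super (s t : ℤ) : Bfl s + Bfl t ≤ Bfl (s + t) := by
  unfold Bfl
  rw [Int.le_floor]
  push_cast
  have h1 := Int.floor_le ((s:ℝ) * (1 + rr))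
  have h2 := Int.floor_le ((t:ℝ) * (1 + rr))
  push_cast
  nlinarith [h1, h2]

lemma Bfl_sub (s t : ℤ) : Bfl (s + t) ≤ Bfl s + Bfl t + 1 := by
  have : Bfl (s+t) < Bfl s + Bfl t + 2 := by
    rw [Bfl, Int.floor_lt]
    have h1 := Int.lt_floor_add_one ((s:ℝ) * (1 + rr))
    have h2 := Int.lt_floor_add_one ((t:ℝ) * (1 + rr))
    rw [Bfl, Bfl] at *
    push_cast
    nlinarith [h1, h2]
  omega

lemma Bfl_add_nonneg (t k : ℤ) (hk : 0 ≤ k) : Bfl t + k ≤ Bfl (t + k) := by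
  unfold Bfl
  rw [Int.le_floor]
  have h1 := Int.floor_le ((t:ℝ) * (1 + rr))
  push_cast
  have : (k:ℝ) ≤ k * (1 + rr) := by nlinarith [rr_pos, (show (0:ℝ) ≤ (k:ℝ) by exact_mod_cast hk)]
  nlinarith [h1]

lemma Bfl_step_mono {s t : ℤ} (h : s ≤ t) : Bfl s - s ≤ Bfl t - t := by
  have := Bfl_add_nonneg s (t - s) (by omega)
  have e : s + (t - s) = t := by ring
  rw [e] at this
  omega

lemma Bfl_self {t : ℤ} (h : 0 ≤ t) : t ≤ Bfl t := by
  rw [Bfl, Int.le_floor]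
  have : (0:ℝ) ≤ (t:ℝ) := by exact_mod_cast h
  nlinarith [rr_pos]

lemma Bfl_two : Bfl 2 = 3 := by
  rw [Bfl, Int.floor_eq_iff]
  constructor
  · push_cast; nlinarith [rr_ge_half]
  · push_cast; nlinarith [rr_lt_one]

lemma Bfl_nmul_ge (n : ℕ) (t : ℤ) : (n:ℤ) * Bfl t ≤ Bfl ((n:ℤ) * t) := by
  induction n with
  | zero => simp [Bfl_zero]
  | succ k ih =>
    push_cast
    have h1 : ((k:ℤ) + 1) * t = (k:ℤ) * t + t := by ring
    rw [h1]
    have := Bfl_super ((k:ℤ) * t) t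
    push_cast at ih
    linarith

lemma Bfl_nmul_le (n : ℕ) (t : ℤ) : Bfl (((n:ℤ)+1) * t) ≤ ((n:ℤ)+1) * Bfl t + n := by
  induction n with
  | zero => simp
  | succ k ih =>
    have h1 : ((k:ℤ)+1+1) * t = ((k:ℤ)+1) * t + t := by ring
    push_cast
    rw [h1]
    have := Bfl_sub (((k:ℤ)+1) * t) t
    push_cast at ih
    linarith

lemma K1init (n : ℕ) (hn : 1 ≤ n) (x y : List Bool) (hx : ValidFib x) (hy : ValidFib y)
    (h : (fibVal y : ℤ) - n * fibVal x ≤ -(n : ℤ) - 1) :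
    (downVal y : ℤ) - n * downVal x ≤ -1 := by
  obtain ⟨k, rfl⟩ : ∃ k, n = k + 1 := ⟨n - 1, by omega⟩
  set p : ℤ := (fibVal x : ℤ) with hp
  set q : ℤ := (fibVal y : ℤ) with hq
  have hdx := downVal_eq x hx
  have hdy := downVal_eq y hy
  have hq1 : q + 1 ≤ ((k:ℤ)+1) * p - ((k:ℤ)+1) := by push_cast at h ⊢; linarith
  have h2 : Bfl (q + 1) - (q + 1) ≤ Bfl (((k:ℤ)+1) * p - ((k:ℤ)+1)) - (((k:ℤ)+1) * p - ((k:ℤ)+1)) :=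
    Bfl_step_mono hq1
  have h3 : Bfl (((k:ℤ)+1) * (p + 1)) ≤ ((k:ℤ)+1) * Bfl (p + 1) + k := Bfl_nmul_le k (p + 1)
  have h4 : (((k:ℤ)+1) * p - ((k:ℤ)+1)) + 2 * ((k:ℤ)+1) = ((k:ℤ)+1) * (p + 1) := by ring
  have h5 : Bfl (((k:ℤ)+1) * p - ((k:ℤ)+1)) + Bfl (2 * ((k:ℤ)+1)) ≤ Bfl (((k:ℤ)+1) * (p + 1)) := by
    have := Bfl_super (((k:ℤ)+1) * p - ((k:ℤ)+1)) (2 * ((k:ℤ)+1))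
    rwa [h4] at this
  have h6 : ((k:ℤ)+1) * 3 ≤ Bfl (2 * ((k:ℤ)+1)) := by
    have h7 : ((k+1 : ℕ) : ℤ) * Bfl 2 ≤ Bfl (((k+1 : ℕ):ℤ) * 2) := Bfl_nmul_ge (k+1) 2
    rw [Bfl_two] at h7
    have e : ((k+1 : ℕ):ℤ) * 2 = 2 * ((k:ℤ)+1) := by push_cast; ring
    rw [e] at h7
    push_cast at h7
    linarith
  rw [hdx, hdy]
  push_cast at h ⊢
  nlinarith [h2, h3, h5, h6]

lemma K2init (n : ℕ) (hn : 1 ≤ n) (x y : List Bool) (hx : ValidFib x) (hy : ValidFib y)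
    (h : (fibVal y : ℤ) - n * fibVal x ≥ 2 * n) :
    (downVal y : ℤ) - n * downVal x ≥ 0 := by
  set p : ℤ := (fibVal x : ℤ) with hp
  set q : ℤ := (fibVal y : ℤ) with hq
  have hdx := downVal_eq x hx
  have hdy := downVal_eq y hy
  have hq1 : (n:ℤ) * p + 2 * n + 1 ≤ q + 1 := by linarith
  have h2 : Bfl ((n:ℤ) * p + 2 * n + 1) - ((n:ℤ) * p + 2 * n + 1) ≤ Bfl (q + 1) - (q + 1) :=
    Bfl_step_mono hq1
  have h3 : (n:ℤ) * Bfl (p + 1) ≤ Bfl ((n:ℤ) * (p + 1)) := Bfl_nmul_ge n (p + 1)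
  have h4 : (n:ℤ) * (p + 1) + ((n:ℤ) + 1) = (n:ℤ) * p + 2 * n + 1 := by ring
  have h5 : Bfl ((n:ℤ) * (p + 1)) + Bfl ((n:ℤ) + 1) ≤ Bfl ((n:ℤ) * p + 2 * n + 1) := by
    have := Bfl_super ((n:ℤ) * (p + 1)) ((n:ℤ) + 1)
    rwa [h4] at this
  have h6 : (n:ℤ) + 1 ≤ Bfl ((n:ℤ) + 1) := Bfl_self (by positivity)
  rw [hdx, hdy]
  nlinarith [h2, h3, h5, h6]

lemma fibVal_concat (w : List Bool) (a : Bool) :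
    fibVal (w ++ [a]) = fibVal w + downVal w + (if a then 1 else 0) := by
  induction w with
  | nil => cases a <;> simp [fibVal, downVal]
  | cons c t ih =>
    have hfib : Nat.fib (t.length + 3) = Nat.fib (t.length + 1) + Nat.fib (t.length + 2) :=
      Nat.fib_add_two
    cases c <;>
      simp [fibVal, downVal, ih, List.length_append] <;>
      simp only [show t.length+1+2 = t.length+3 from rfl,
        show t.length+1+1 = t.length+2 from rfl] at * <;> omega

lemma downVal_concat (w : List Bool) (a : Bool) :
    downVal (w ++ [a]) = fibVal w + (if a then 1 else 0) := by
  induction w with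
  | nil => cases a <;> simp [fibVal, downVal]
  | cons c t ih =>
    cases c <;> simp [fibVal, downVal, ih, List.length_append] <;>
      simp only [show t.length+1+2 = t.length+3 from rfl,
        show t.length+1+1 = t.length+2 from rfl] at * <;> omega

def DD (n : ℕ) (X Y : List Bool) : ℤ := (fibVal Y : ℤ) - n * fibVal X
def EE (n : ℕ) (X Y : List Bool) : ℤ := (downVal Y : ℤ) - n * downVal X

lemma DD_concat (n : ℕ) (X Y : List Bool) (a b : Bool) :
    DD n (X ++ [a]) (Y ++ [b]) =
      DD n X Y + EE n X Y + (if b then 1 else 0) - n * (if a then 1 else 0) := by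
  unfold DD EE
  rw [fibVal_concat, fibVal_concat]
  cases a <;> cases b <;> push_cast <;> ring

lemma EE_concat (n : ℕ) (X Y : List Bool) (a b : Bool) :
    EE n (X ++ [a]) (Y ++ [b]) =
      DD n X Y + (if b then 1 else 0) - n * (if a then 1 else 0) := by
  unfold DD EE
  rw [downVal_concat, downVal_concat]
  cases a <;> cases b <;> push_cast <;> ring

def Inv1 (n : ℕ) (X Y : List Bool) : Prop :=
  DD n X Y ≤ -(n:ℤ) - 1 ∧ EE n X Y ≤ -1

def Inv2 (n : ℕ) (X Y : List Bool) : Prop :=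
  (DD n X Y ≥ 2 * n ∧ EE n X Y ≥ 0) ∨
  (X.getLast? = some true ∧ DD n X Y ≥ n ∧ EE n X Y ≥ n)

lemma ite_bnd (b : Bool) : (0:ℤ) ≤ (if b then 1 else 0) ∧ ((if b then 1 else 0) : ℤ) ≤ 1 := by
  cases b <;> norm_num

lemma step1 (n : ℕ) (hn : 1 ≤ n) (X Y : List Bool) (a b : Bool)
    (h : Inv1 n X Y) : Inv1 n (X ++ [a]) (Y ++ [b]) := by
  obtain ⟨h1, h2⟩ := h
  obtain ⟨ha0, ha1⟩ := ite_bnd a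
  obtain ⟨hb0, hb1⟩ := ite_bnd b
  have hn' : (1:ℤ) ≤ n := by exact_mod_cast hn
  have hna : (0:ℤ) ≤ n * (if a then 1 else 0) := by positivity
  constructor
  · rw [DD_concat]; linarith
  · rw [EE_concat]; linarith

lemma valid_mid {X : List Bool} {a : Bool} {u : List Bool}
    (h : ValidFib (X ++ a :: u)) : ValidFib (X ++ [a]) := by
  simp only [ValidFib, List.Chain'] at h ⊢; rw [List.isChain_append] at h ⊢
  obtain ⟨h1, h2, h3⟩ := h
  refine ⟨h1, List.isChain_singleton a, ?_⟩
  intro p hp q hq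
  exact h3 p hp q (by simpa using hq)

lemma step2 (n : ℕ) (hn : 1 ≤ n) (X Y : List Bool) (a b : Bool)
    (hX : ValidFib (X ++ [a]))
    (h : Inv2 n X Y) : Inv2 n (X ++ [a]) (Y ++ [b]) := by
  obtain ⟨ha0, ha1⟩ := ite_bnd a
  obtain ⟨hb0, hb1⟩ := ite_bnd b
  have hn' : (1:ℤ) ≤ n := by exact_mod_cast hn
  rcases h with ⟨h1, h2⟩ | ⟨hlast, h1, h2⟩
  · cases a with
    | true =>
      right
      refine ⟨by simp, ?_, ?_⟩
      · rw [DD_concat]; simp only [if_pos]; linarith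
      · rw [EE_concat]; simp only [if_pos]; linarith
    | false =>
      left
      constructor
      · rw [DD_concat]; simp only [if_neg Bool.false_ne_true]; linarith
      · rw [EE_concat]; simp only [if_neg Bool.false_ne_true]; linarith
  · -- last of X is true, so a must be false
    have ha : a = false := by
      simp only [ValidFib, List.Chain'] at hX; rw [List.isChain_append] at hX
      have := hX.2.2 true (by rw [hlast]; rfl) a rfl
      simpa using this
    subst ha
    left
    constructor
    · rw [DD_concat]; simp only [if_neg Bool.false_ne_true]; linarith
    · rw [EE_concat]; simp only [if_neg Bool.false_ne_true]; linarith

lemma valid_left {X u : List Bool} (h : ValidFib (X ++ u)) : ValidFib X :=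
  (List.isChain_append.mp h).1

lemma valid_shift {X : List Bool} {a : Bool} {u : List Bool}
    (h : ValidFib (X ++ a :: u)) : ValidFib ((X ++ [a]) ++ u) := by
  simpa [List.append_assoc] using h

lemma extend1 (n : ℕ) (hn : 1 ≤ n) :
    ∀ (u v X Y : List Bool), u.length = v.length →
      ValidFib (X ++ u) → ValidFib (Y ++ v) → Inv1 n X Y → Inv1 n (X ++ u) (Y ++ v) := by
  intro u
  induction u with
  | nil =>
    intro v X Y hlen _ _ h
    have hv : v = [] := List.eq_nil_of_length_eq_zero (by simpa using hlen.symm)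
    subst hv; simpa using h
  | cons a u' ih =>
    intro v X Y hlen hXu hYv h
    cases v with
    | nil => simp at hlen
    | cons b v' =>
      have h1 := valid_shift hXu
      have h2 := valid_shift hYv
      have hstep := step1 n hn X Y a b h
      have := ih v' (X ++ [a]) (Y ++ [b]) (by simpa using hlen) h1 h2 hstep
      simpa [List.append_assoc] using this

lemma extend2 (n : ℕ) (hn : 1 ≤ n) :
    ∀ (u v X Y : List Bool), u.length = v.length →
      ValidFib (X ++ u) → ValidFib (Y ++ v) → Inv2 n X Y → Inv2 n (X ++ u) (Y ++ v) := by
  intro u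
  induction u with
  | nil =>
    intro v X Y hlen _ _ h
    have hv : v = [] := List.eq_nil_of_length_eq_zero (by simpa using hlen.symm)
    subst hv; simpa using h
  | cons a u' ih =>
    intro v X Y hlen hXu hYv h
    cases v with
    | nil => simp at hlen
    | cons b v' =>
      have h1 := valid_shift hXu
      have h2 := valid_shift hYv
      have hstep := step2 n hn X Y a b (valid_mid hXu) h
      have := ih v' (X ++ [a]) (Y ++ [b]) (by simpa using hlen) h1 h2 hstep
      simpa [List.append_assoc] using this

theorem interval_I_n (n : ℕ) (hn : 1 ≤ n) (x y u v : List Bool)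
    (hxy : x.length = y.length) (huv : u.length = v.length)
    (hxu : ValidFib (x ++ u)) (hyv : ValidFib (y ++ v)) :
    ((fibVal y : ℤ) - n * fibVal x ≤ -(n : ℤ) - 1 →
      (fibVal (y ++ v) : ℤ) - n * fibVal (x ++ u) ≤ -(n : ℤ) - 1) ∧
    ((fibVal y : ℤ) - n * fibVal x ≥ 2 * n →
      (fibVal (y ++ v) : ℤ) - n * fibVal (x ++ u) ≥ n) ∧
    ((fibVal y : ℤ) - n * fibVal x ≤ -(n : ℤ) - 1 ∨
        (fibVal y : ℤ) - n * fibVal x ≥ 2 * n →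
      ¬ (0 ≤ (fibVal (y ++ v) : ℤ) - n * fibVal (x ++ u) ∧
          (fibVal (y ++ v) : ℤ) - n * fibVal (x ++ u) ≤ (n : ℤ) - 1)) := by
  have hvx : ValidFib x := valid_left hxu
  have hvy : ValidFib y := valid_left hyv
  have hn' : (1:ℤ) ≤ n := by exact_mod_cast hn
  have part1 : (fibVal y : ℤ) - n * fibVal x ≤ -(n : ℤ) - 1 →
      (fibVal (y ++ v) : ℤ) - n * fibVal (x ++ u) ≤ -(n : ℤ) - 1 := by
    intro h
    have hinit : Inv1 n x y := ⟨h, K1init n hn x y hvx hvy h⟩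
    exact (extend1 n hn u v x y huv hxu hyv hinit).1
  have part2 : (fibVal y : ℤ) - n * fibVal x ≥ 2 * n →
      (fibVal (y ++ v) : ℤ) - n * fibVal (x ++ u) ≥ n := by
    intro h
    have hinit : Inv2 n x y := Or.inl ⟨h, K2init n hn x y hvx hvy h⟩
    have := extend2 n hn u v x y huv hxu hyv hinit
    rcases this with ⟨h1, _⟩ | ⟨_, h1, _⟩
    · unfold DD at h1; linarith
    · unfold DD at h1; linarith
  refine ⟨part1, part2, ?_⟩
  rintro (h | h) ⟨hl, hr⟩
  · have := part1 h; linarith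
  · have := part2 h; linarith
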